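/- Let T > 0, α ∈ (0,1), and I ⊆ {1,…,n}. There exist constants C = C(α,m,n,T) > 0 and m₀ = m₀(α,m,n) > 0 such that for every function u ∈ C^{0,2+α}_{WF}([0,T]×S̄_{n,m}) whose support is contained in [0,T]×M̄''_I, every ε ∈ (0,1), and all l, k ∈ {1,…,m}: ‖u_{y_l y_k}‖_{C([0,T]×S̄_{n,m})} ≤ ε ‖u‖_{C^{0,2+α}_{WF}([0,T]×S̄_{n,m})} + C ε^{−m₀} ‖u‖_{C([0,T]×S̄_{n,m})}. -/

import Mathlib

open scoped ENNReal BigOperators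
open Set

noncomputable section

namespace Kimura

/-- Spatial variable space `ℝ^n × ℝ^m`. -/
abbrev Z (n m : ℕ) : Type := (Fin n → ℝ) × (Fin m → ℝ)

/-- Time–space variable space. -/
abbrev E (n m : ℕ) : Type := ℝ × Z n m

variable {n m : ℕ}

/-- The open orthant `S_{n,m} = (0,∞)^n × ℝ^m`. -/
def Sopen (n m : ℕ) : Set (Z n m) := {z | ∀ i, 0 < z.1 i}

/-- The closed orthant `S̄_{n,m} = [0,∞)^n × ℝ^m`. -/
def Sbar (n m : ℕ) : Set (Z n m) := {z | ∀ i, 0 ≤ z.1 i}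

/-- The function `F` used to define the WF distance. -/
def Fwf (s : ℝ) : ℝ := if s ≤ 1 then 2 * Real.sqrt s else s + 1

/-- The spatial WF distance `ρ₀`. -/
def rho0 (z0 z : Z n m) : ℝ :=
  (⨆ i : Fin n, |Fwf (z0.1 i) - Fwf (z.1 i)|) + ⨆ l : Fin m, |z0.2 l - z.2 l|

/-- The parabolic WF distance `ρ`. -/
def rho (P0 P : E n m) : ℝ := rho0 P0.2 P.2 + Real.sqrt |P0.1 - P.1|

/-- The parabolic cylinder `J × D`. -/
def QT (J : Set ℝ) (D : Set (Z n m)) : Set (E n m) := J ×ˢ D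

/-- Supremum norm on `J × D` (valued in `ℝ≥0∞`). -/
def supN (J : Set ℝ) (D : Set (Z n m)) (u : E n m → ℝ) : ℝ≥0∞ :=
  ⨆ P ∈ QT J D, ENNReal.ofReal |u P|

/-- The WF Hölder seminorm of exponent `a` on `J × D`. -/
def holderSemi (a : ℝ) (J : Set ℝ) (D : Set (Z n m)) (u : E n m → ℝ) : ℝ≥0∞ :=
  ⨆ P1 ∈ QT J D, ⨆ P2 ∈ QT J D, ⨆ _ : P1 ≠ P2,
    ENNReal.ofReal (|u P1 - u P2| / rho P1 P2 ^ a)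

/-- The `C^{0,α}_{WF}` norm on `J × D`. -/
def holderN (a : ℝ) (J : Set ℝ) (D : Set (Z n m)) (u : E n m → ℝ) : ℝ≥0∞ :=
  supN J D u + holderSemi a J D u

/-- Time direction. -/
def eT (n m : ℕ) : E n m := (1, 0)

/-- `x_i` direction. -/
def eX (n m : ℕ) (i : Fin n) : E n m := (0, (Pi.single i 1, 0))

/-- `y_l` direction. -/
def eY (n m : ℕ) (l : Fin m) : E n m := (0, (0, Pi.single l 1))

/-- Partial (line) derivative along the direction `v`. -/
def dl (v : E n m) (u : E n m → ℝ) : E n m → ℝ := fun P => lineDeriv ℝ u P v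

/-- Iterated partial derivative `D_t^τ D_x^{ζx} D_y^{ζy}`. -/
def multiD (τ : ℕ) (ζx : Fin n → ℕ) (ζy : Fin m → ℕ) (u : E n m → ℝ) : E n m → ℝ :=
  (dl (eT n m))^[τ]
    (((List.ofFn fun i : Fin n => (dl (eX n m i))^[ζx i]).foldr (· ∘ ·) id)
      (((List.ofFn fun l : Fin m => (dl (eY n m l))^[ζy l]).foldr (· ∘ ·) id) u))

/-- A parabolic multi-index `(τ, ζ)`. -/
abbrev MIdx (n m : ℕ) : Type := ℕ × (Fin n → ℕ) × (Fin m → ℕ)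

/-- Parabolic weight `2τ + |ζ|` of a multi-index. -/
def MIdx.wt (p : MIdx n m) : ℕ := 2 * p.1 + ((∑ i, p.2.1 i) + ∑ l, p.2.2 l)

/-- Iterated derivative associated with a multi-index. -/
def multiDP (p : MIdx n m) (u : E n m → ℝ) : E n m → ℝ := multiD p.1 p.2.1 p.2.2 u

/-- Multi-indices of parabolic weight at most `k`. -/
def Idx (n m k : ℕ) : Type := {p : MIdx n m // MIdx.wt p ≤ k}

/-- The `C^{k,α}_{WF}` norm on `J × D`. -/
def CkN (k : ℕ) (a : ℝ) (J : Set ℝ) (D : Set (Z n m)) (u : E n m → ℝ) : ℝ≥0∞ :=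
  ∑' p : Idx n m k, holderN a J D (multiDP p.1 u)

/-- The region `M_I`. -/
def MI (n m : ℕ) (I : Finset (Fin n)) : Set (Z n m) :=
  {z | (∀ i ∈ I, z.1 i ∈ Set.Ioo (0:ℝ) 1) ∧ ∀ j ∉ I, 1 < z.1 j}

/-- The region `M'_I`. -/
def MI' (n m : ℕ) (I : Finset (Fin n)) : Set (Z n m) :=
  {z | (∀ i ∈ I, z.1 i ∈ Set.Ioo (0:ℝ) 1) ∧ ∀ j ∉ I, 1 / 2 < z.1 j}

/-- The region `M''_I`. -/
def MI'' (n m : ℕ) (I : Finset (Fin n)) : Set (Z n m) :=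
  {z | (∀ i ∈ I, z.1 i ∈ Set.Ioo (0:ℝ) 2) ∧ ∀ j ∉ I, 1 / 4 < z.1 j}

/-- The `C^{0,2+α}_{WF}` norm on a piece `D ⊆ M̄_I`. -/
def pieceN (I : Finset (Fin n)) (a : ℝ) (J : Set ℝ) (D : Set (Z n m)) (u : E n m → ℝ) :
    ℝ≥0∞ :=
  CkN 1 a J D u + holderN a J D (dl (eT n m) u)
  + (∑ i ∈ I, ∑ j ∈ I, holderN a J D
      fun P => Real.sqrt (P.2.1 i * P.2.1 j) * dl (eX n m i) (dl (eX n m j) u) P)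
  + (∑ i ∈ I, ∑ j ∈ Iᶜ, holderN a J D
      fun P => Real.sqrt (P.2.1 i) * dl (eX n m i) (dl (eX n m j) u) P)
  + (∑ i ∈ I, ∑ l : Fin m, holderN a J D
      fun P => Real.sqrt (P.2.1 i) * dl (eX n m i) (dl (eY n m l) u) P)
  + (∑ i ∈ Iᶜ, ∑ j ∈ Iᶜ, holderN a J D (dl (eX n m i) (dl (eX n m j) u)))
  + (∑ i ∈ Iᶜ, ∑ l : Fin m, holderN a J D (dl (eX n m i) (dl (eY n m l) u)))
  + ∑ l : Fin m, ∑ q : Fin m, holderN a J D (dl (eY n m l) (dl (eY n m q) u))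

/-- The `C^{0,2+α}_{WF}` norm on `J × D` for an arbitrary domain `D`. -/
def C2N (a : ℝ) (J : Set ℝ) (D : Set (Z n m)) (u : E n m → ℝ) : ℝ≥0∞ :=
  ∑ I : Finset (Fin n), pieceN I a J (D ∩ closure (MI n m I)) u

/-- The `C^{k,2+α}_{WF}` norm on `J × D`. -/
def Ck2N (k : ℕ) (a : ℝ) (J : Set ℝ) (D : Set (Z n m)) (u : E n m → ℝ) : ℝ≥0∞ :=
  ∑' p : Idx n m k, C2N a J D (multiDP p.1 u)

/-- Time-independent extension of a spatial function. -/
def timeExt (f : Z n m → ℝ) : E n m → ℝ := fun P => f P.2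

/-- The elliptic `C^{k,α}_{WF}` norm on `D`. -/
def eCkN (k : ℕ) (a : ℝ) (D : Set (Z n m)) (f : Z n m → ℝ) : ℝ≥0∞ :=
  CkN k a (Set.Icc 0 0) D (timeExt f)

/-- The elliptic `C^{k,2+α}_{WF}` norm on `D`. -/
def eCk2N (k : ℕ) (a : ℝ) (D : Set (Z n m)) (f : Z n m → ℝ) : ℝ≥0∞ :=
  Ck2N k a (Set.Icc 0 0) D (timeExt f)

/-- Supremum norm of a spatial function on `D`. -/
def supNZ (D : Set (Z n m)) (f : Z n m → ℝ) : ℝ≥0∞ := ⨆ z ∈ D, ENNReal.ofReal |f z|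

/-- Membership in the space `C^{k,α}_{WF}(J × D)`. -/
def MemCk (k : ℕ) (a : ℝ) (J : Set ℝ) (D : Set (Z n m)) (u : E n m → ℝ) : Prop :=
  CkN k a J D u ≠ ⊤ ∧ ∀ p : Idx n m k, ContinuousOn (multiDP p.1 u) (QT J D)

/-- Membership in the space `C^{k,2+α}_{WF}(J × D)`. -/
def MemCk2 (k : ℕ) (a : ℝ) (J : Set ℝ) (D : Set (Z n m)) (u : E n m → ℝ) : Prop :=
  Ck2N k a J D u ≠ ⊤
  ∧ (∀ p : Idx n m (k + 1), ContinuousOn (multiDP p.1 u) (QT J D))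
  ∧ (∀ p : Idx n m k, ContinuousOn (dl (eT n m) (multiDP p.1 u)) (QT J D))
  ∧ (∀ p : Idx n m (k + 2), ContinuousOn (multiDP p.1 u) (QT J (D ∩ Sopen n m)))

/-- Membership in the elliptic space `C^{k,α}_{WF}(D)`. -/
def MemECk (k : ℕ) (a : ℝ) (D : Set (Z n m)) (f : Z n m → ℝ) : Prop :=
  MemCk k a (Set.Icc 0 0) D (timeExt f)

/-- Membership in the elliptic space `C^{k,2+α}_{WF}(D)`. -/
def MemECk2 (k : ℕ) (a : ℝ) (D : Set (Z n m)) (f : Z n m → ℝ) : Prop :=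
  MemCk2 k a (Set.Icc 0 0) D (timeExt f)

/-- Coefficients of a generalized Kimura operator. -/
structure Coeffs (n m : ℕ) where
  a : Fin n → Z n m → ℝ
  tA : Fin n → Fin n → Z n m → ℝ
  b : Fin n → Z n m → ℝ
  c : Fin n → Fin m → Z n m → ℝ
  d : Fin m → Fin m → Z n m → ℝ
  e : Fin m → Z n m → ℝ

/-- The generalized Kimura operator `L`. -/
def Lop (co : Coeffs n m) (u : E n m → ℝ) : E n m → ℝ := fun P =>
  (∑ i, (P.2.1 i * co.a i P.2 * dl (eX n m i) (dl (eX n m i) u) P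
        + co.b i P.2 * dl (eX n m i) u P))
  + (∑ i, ∑ j, P.2.1 i * P.2.1 j * co.tA i j P.2 * dl (eX n m i) (dl (eX n m j) u) P)
  + (∑ i, ∑ l, P.2.1 i * co.c i l P.2 * dl (eX n m i) (dl (eY n m l) u) P)
  + (∑ q, ∑ l, co.d q l P.2 * dl (eY n m q) (dl (eY n m l) u) P)
  + ∑ l, co.e l P.2 * dl (eY n m l) u P

/-- Strict ellipticity (condition (1) of the Assumption). -/
def Ellipt (δ : ℝ) (co : Coeffs n m) : Prop :=
  ∀ I : Finset (Fin n), ∀ z ∈ closure (MI n m I), ∀ ξ : Fin n → ℝ, ∀ η : Fin m → ℝ,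
    δ * ((∑ i, ξ i ^ 2) + ∑ l, η l ^ 2) ≤
      (∑ i ∈ I, co.a i z * ξ i ^ 2) + (∑ i ∈ Iᶜ, z.1 i * co.a i z * ξ i ^ 2)
      + (∑ i ∈ I, ∑ j ∈ I, co.tA i j z * ξ i * ξ j)
      + (∑ i ∈ I, ∑ j ∈ Iᶜ, z.1 j * (co.tA i j z + co.tA j i z) * ξ i * ξ j)
      + (∑ i ∈ Iᶜ, ∑ j ∈ Iᶜ, z.1 i * z.1 j * co.tA i j z * ξ i * ξ j)
      + (∑ i ∈ I, ∑ l, co.c i l z * ξ i * η l)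
      + (∑ i ∈ Iᶜ, ∑ l, z.1 i * co.c i l z * ξ i * η l)
      + ∑ q, ∑ l, co.d q l z * η q * η l

/-- Hölder continuity of the coefficients (condition (2) of the Assumption). -/
def HolderBd (k : ℕ) (a K : ℝ) (co : Coeffs n m) : Prop :=
  ∀ I : Finset (Fin n),
    (∑ i ∈ I, eCkN k a (closure (MI n m I)) (co.a i))
    + (∑ i ∈ Iᶜ, eCkN k a (closure (MI n m I)) fun z => z.1 i * co.a i z)
    + (∑ i ∈ I, ∑ j ∈ I, eCkN k a (closure (MI n m I)) (co.tA i j))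
    + (∑ i ∈ I, ∑ j ∈ Iᶜ,
        (eCkN k a (closure (MI n m I)) (fun z => z.1 j * co.tA i j z)
         + eCkN k a (closure (MI n m I)) fun z => z.1 j * co.tA j i z))
    + (∑ i ∈ Iᶜ, ∑ j ∈ Iᶜ, eCkN k a (closure (MI n m I)) fun z => z.1 i * z.1 j * co.tA i j z)
    + (∑ i ∈ I, ∑ l, eCkN k a (closure (MI n m I)) (co.c i l))
    + (∑ i ∈ Iᶜ, ∑ l, eCkN k a (closure (MI n m I)) fun z => z.1 i * co.c i l z)
    + (∑ q, ∑ l, eCkN k a (closure (MI n m I)) (co.d q l))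
    + (∑ i, eCkN k a (closure (MI n m I)) (co.b i))
    + (∑ l, eCkN k a (closure (MI n m I)) (co.e l))
    ≤ ENNReal.ofReal K

/-- Nonnegativity of the drift (condition (3) of the Assumption). -/
def NonnegDrift (co : Coeffs n m) : Prop :=
  ∀ i, ∀ z ∈ Sbar n m, z.1 i = 0 → 0 ≤ co.b i z

/-- The full coefficient Assumption of order `k`, exponent `a`, constants `δ`, `K`. -/
def Assump (k : ℕ) (a δ K : ℝ) (co : Coeffs n m) : Prop :=
  Ellipt δ co ∧ HolderBd k a K co ∧ NonnegDrift co

/-- The Euclidean ball of radius `r` about `z0`, relative to `S_{n,m}`. -/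
def ball (z0 : Z n m) (r : ℝ) : Set (Z n m) :=
  {z ∈ Sopen n m |
    Real.sqrt ((∑ i, (z.1 i - z0.1 i) ^ 2) + ∑ l, (z.2 l - z0.2 l) ^ 2) < r}

/-- A function all of whose iterated derivatives are continuous and bounded on `J × D`. -/
def SmoothBdd (J : Set ℝ) (D : Set (Z n m)) (g : E n m → ℝ) : Prop :=
  ∀ p : MIdx n m,
    ContinuousOn (multiDP p g) (QT J D) ∧ ∃ M : ℝ, ∀ P ∈ QT J D, |multiDP p g P| ≤ M

/-- Bounded continuous function on a set. -/
def BCOn {X : Type*} [TopologicalSpace X] (g : X → ℝ) (D : Set X) : Prop :=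
  ContinuousOn g D ∧ ∃ M : ℝ, ∀ x ∈ D, |g x| ≤ M

open MeasureTheory in

lemma lemA (g : ℝ → ℝ) (h K1 M : ℝ) (hh : 0 < h) (hK1 : 0 ≤ K1) (hM : 0 ≤ M)
    (hHol : ∀ s ∈ Set.Icc (0:ℝ) h, |deriv g s - deriv g 0| ≤ K1)
    (hBd : ∀ s ∈ Set.Icc (0:ℝ) h, |g s| ≤ M) :
    |deriv g 0| ≤ K1 + 2 * M / h := by
  have hMh : 0 ≤ 2 * M / h := by positivity
  by_cases hdiff : ∀ s ∈ Set.Icc (0:ℝ) h, DifferentiableAt ℝ g s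
  · have hmeas : Measurable (deriv g) := measurable_deriv g
    have hbd : ∀ s ∈ Set.Icc (0:ℝ) h, |deriv g s| ≤ |deriv g 0| + K1 := by
      intro s hs
      have h1 := hHol s hs
      have h2 : |deriv g s| - |deriv g 0| ≤ K1 := (abs_sub_abs_le_abs_sub _ _).trans h1
      linarith
    have hint : IntervalIntegrable (deriv g) volume 0 h := by
      rw [intervalIntegrable_iff_integrableOn_Icc_of_le hh.le]
      apply Measure.integrableOn_of_bounded (M := |deriv g 0| + K1)
      · simp [Real.volume_Icc]
      · exact hmeas.aestronglyMeasurable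
      · exact MeasureTheory.ae_restrict_of_forall_mem measurableSet_Icc fun s hs => by
          simpa [Real.norm_eq_abs] using hbd s hs
    have hftc : ∫ y in (0:ℝ)..h, deriv g y = g h - g 0 :=
      intervalIntegral.integral_deriv_eq_sub
        (fun x hx => hdiff x (by simpa [Set.uIcc_of_le hh.le] using hx)) hint
    have hc : IntervalIntegrable (fun _ : ℝ => deriv g 0) volume 0 h :=
      intervalIntegrable_const
    have hsub : ∫ y in (0:ℝ)..h, (deriv g y - deriv g 0)
        = (g h - g 0) - h * deriv g 0 := by
      rw [intervalIntegral.integral_sub hint hc, hftc,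
        intervalIntegral.integral_const]
      simp [smul_eq_mul]
    have hbound : |(g h - g 0) - h * deriv g 0| ≤ K1 * |h - 0| := by
      rw [← hsub]
      have := intervalIntegral.norm_integral_le_of_norm_le_const (C := K1) (a := (0:ℝ))
        (b := h) (f := fun y => deriv g y - deriv g 0) ?_
      · simpa [Real.norm_eq_abs] using this
      · intro x hx
        rw [Set.uIoc_of_le hh.le] at hx
        simpa [Real.norm_eq_abs] using hHol x ⟨hx.1.le, hx.2⟩
    have h1 : h * |deriv g 0| ≤ 2 * M + K1 * h := by
      have h2 : (g h - g 0) - ((g h - g 0) - h * deriv g 0) = h * deriv g 0 := by ring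
      have h5 : |h * deriv g 0| ≤ |g h - g 0| + |(g h - g 0) - h * deriv g 0| := by
        calc |h * deriv g 0| = |(g h - g 0) - ((g h - g 0) - h * deriv g 0)| := by rw [h2]
          _ ≤ |g h - g 0| + |(g h - g 0) - h * deriv g 0| := abs_sub _ _
      have h3 : |g h - g 0| ≤ 2 * M := by
        have hb1 := hBd h ⟨hh.le, le_refl h⟩
        have hb2 := hBd 0 ⟨le_refl 0, hh.le⟩
        calc |g h - g 0| ≤ |g h| + |g 0| := abs_sub _ _
          _ ≤ 2 * M := by linarith
      have h4 : |(g h - g 0) - h * deriv g 0| ≤ K1 * h := by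
        simpa [abs_of_pos hh] using hbound
      calc h * |deriv g 0| = |h * deriv g 0| := by rw [abs_mul, abs_of_pos hh]
        _ ≤ 2 * M + K1 * h := by linarith
    have h6 : |deriv g 0| ≤ (2 * M + K1 * h) / h := by
      rw [le_div_iff₀ hh]
      linarith [h1]
    have h7 : (2 * M + K1 * h) / h = K1 + 2 * M / h := by
      field_simp
      ring
    rwa [h7] at h6
  · push_neg at hdiff
    obtain ⟨s, hs, hnd⟩ := hdiff
    have hz : deriv g s = 0 := deriv_zero_of_not_differentiableAt hnd
    have h1 := hHol s hs
    rw [hz, zero_sub, abs_neg] at h1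
    linarith
section Aux
variable {X : Type*}

lemma foldr_id (L : List (X → X)) (h : ∀ g ∈ L, g = id) :
    L.foldr (· ∘ ·) id = id := by
  induction L with
  | nil => rfl
  | cons f t ih =>
    rw [List.foldr_cons, h f List.mem_cons_self,
      ih fun g hg => h g (List.mem_cons_of_mem _ hg)]
    rfl

lemma foldr_single {k : ℕ} (f : Fin k → (X → X)) (q : Fin k)
    (hf : ∀ j, j ≠ q → f j = id) : (List.ofFn f).foldr (· ∘ ·) id = f q := by
  induction k with
  | zero => exact q.elim0
  | succ k ih =>
    rw [List.ofFn_succ, List.foldr_cons]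
    cases q using Fin.cases with
    | zero =>
      have h2 : (List.ofFn fun j : Fin k => f j.succ).foldr (· ∘ ·) id = id := by
        apply foldr_id
        intro g hg
        obtain ⟨j, rfl⟩ := List.mem_ofFn.mp hg
        exact hf _ (Fin.succ_ne_zero j)
      rw [h2, Function.comp_id]
    | succ j' =>
      rw [hf 0 (Fin.succ_ne_zero j').symm, Function.id_comp]
      exact ih (fun j => f j.succ) j' fun j hj =>
        hf _ (fun hc => hj (Fin.succ_injective _ hc))

end Aux

lemma multiD_zero (u : E n m → ℝ) : multiD 0 0 0 u = u := by
  unfold multiD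
  rw [Function.iterate_zero]
  have hx : (List.ofFn fun i : Fin n => (dl (eX n m i))^[(0 : Fin n → ℕ) i]).foldr (· ∘ ·) id = id := by
    apply foldr_id
    intro g hg
    obtain ⟨j, rfl⟩ := List.mem_ofFn.mp hg
    rfl
  have hy : (List.ofFn fun l : Fin m => (dl (eY n m l))^[(0 : Fin m → ℕ) l]).foldr (· ∘ ·) id = id := by
    apply foldr_id
    intro g hg
    obtain ⟨j, rfl⟩ := List.mem_ofFn.mp hg
    rfl
  rw [hx, hy]
  rfl

lemma multiD_y (q : Fin m) (u : E n m → ℝ) :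
    multiD 0 0 (Pi.single q 1) u = dl (eY n m q) u := by
  unfold multiD
  rw [Function.iterate_zero]
  have hx : (List.ofFn fun i : Fin n => (dl (eX n m i))^[(0 : Fin n → ℕ) i]).foldr (· ∘ ·) id = id := by
    apply foldr_id
    intro g hg
    obtain ⟨j, rfl⟩ := List.mem_ofFn.mp hg
    rfl
  have hy : (List.ofFn fun l : Fin m => (dl (eY n m l))^[(Pi.single q 1 : Fin m → ℕ) l]).foldr (· ∘ ·) id
      = (dl (eY n m q))^[(Pi.single q 1 : Fin m → ℕ) q] := by
    apply foldr_single
    intro j hj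
    rw [Pi.single_apply, if_neg hj]
    rfl
  rw [hx, hy, Pi.single_eq_same, Function.iterate_one]
  rfl
lemma mem_closure_MI (z : Z n m) (I : Finset (Fin n))
    (h1 : ∀ i ∈ I, z.1 i ∈ Set.Icc (0:ℝ) 1) (h2 : ∀ j ∉ I, (1:ℝ) ≤ z.1 j) :
    z ∈ closure (MI n m I) := by
  rw [mem_closure_iff_seq_limit]
  refine ⟨fun k => ((fun i => if i ∈ I then (1 - 1/(k+2)) * z.1 i + (1/(k+2)) * (1/2)
      else z.1 i + 1/(k+2)), z.2), fun k => ?_, ?_⟩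
  · constructor
    · intro i hi
      have hk : (0:ℝ) < 1/(k+2) := by positivity
      have hk1 : (1:ℝ)/(k+2) ≤ 1/2 := by
        rw [div_le_div_iff₀ (by positivity) (by norm_num)]
        push_cast; linarith
      obtain ⟨hz0, hz1⟩ := h1 i hi
      simp only [hi, if_pos]
      constructor
      · have : (0:ℝ) ≤ (1 - 1/(k+2)) * z.1 i := by
          apply mul_nonneg (by linarith) hz0
        nlinarith
      · nlinarith
    · intro j hj
      have hk : (0:ℝ) < 1/(k+2) := by positivity
      have := h2 j hj
      simp only [if_neg hj]
      linarith
  · apply Filter.Tendsto.prodMk_nhds _ tendsto_const_nhds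
    rw [tendsto_pi_nhds]
    intro i
    by_cases hi : i ∈ I
    · simp only [hi, if_pos]
      have hlim : Filter.Tendsto (fun k : ℕ => (1:ℝ)/(k+2)) Filter.atTop (nhds 0) := by
        simp only [one_div]
        apply Filter.Tendsto.comp tendsto_inv_atTop_zero
        exact Filter.tendsto_atTop_add_const_right Filter.atTop 2 tendsto_natCast_atTop_atTop
      have : Filter.Tendsto (fun k : ℕ => (1 - 1/(k+2)) * z.1 i + (1/(k+2)) * (1/2))
          Filter.atTop (nhds ((1 - 0) * z.1 i + 0 * (1/2))) := by
        apply Filter.Tendsto.add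
        · exact (Filter.Tendsto.sub tendsto_const_nhds hlim).mul tendsto_const_nhds
        · exact hlim.mul tendsto_const_nhds
      simpa using this
    · simp only [hi, if_neg, if_false]
      have hlim : Filter.Tendsto (fun k : ℕ => (1:ℝ)/(k+2)) Filter.atTop (nhds 0) := by
        simp only [one_div]
        apply Filter.Tendsto.comp tendsto_inv_atTop_zero
        exact Filter.tendsto_atTop_add_const_right Filter.atTop 2 tendsto_natCast_atTop_atTop
      simpa using Filter.Tendsto.add (tendsto_const_nhds (x := z.1 i)) hlim
lemma rho_shift (Q : E n m) (l : Fin m) (s : ℝ) (hs : 0 ≤ s) :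
    rho (Q + s • eY n m l) Q = s := by
  have h1 : (Q + s • eY n m l).1 = Q.1 := by simp [eY]
  have h2 : ∀ i, (Q + s • eY n m l).2.1 i = Q.2.1 i := by intro i; simp [eY]
  have h3 : ∀ l', (Q + s • eY n m l).2.2 l' = Q.2.2 l' + s * (Pi.single l 1 : Fin m → ℝ) l' := by
    intro l'; simp [eY]
  unfold rho rho0
  rw [h1]
  have hA : (⨆ i : Fin n, |Fwf ((Q + s • eY n m l).2.1 i) - Fwf (Q.2.1 i)|) = 0 := by
    have : ∀ i, |Fwf ((Q + s • eY n m l).2.1 i) - Fwf (Q.2.1 i)| = 0 := by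
      intro i; rw [h2 i]; simp
    rcases isEmpty_or_nonempty (Fin n) with h | h
    · exact Real.iSup_of_isEmpty _
    · simp only [this]
      exact ciSup_const
  have hB : (⨆ l' : Fin m, |(Q + s • eY n m l).2.2 l' - Q.2.2 l'|) = s := by
    have hv : ∀ l', |(Q + s • eY n m l).2.2 l' - Q.2.2 l'| = if l' = l then s else 0 := by
      intro l'
      rw [h3 l', Pi.single_apply]
      by_cases hl : l' = l <;> simp [hl, abs_of_nonneg hs]
    haveI : Nonempty (Fin m) := ⟨l⟩
    apply le_antisymm
    · apply ciSup_le
      intro l'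
      rw [hv l']
      by_cases hl : l' = l <;> simp [hl, hs]
    · have := le_ciSup (f := fun l' => |(Q + s • eY n m l).2.2 l' - Q.2.2 l'|)
        (Set.Finite.bddAbove (Set.finite_range _)) l
      rwa [hv l, if_pos rfl] at this
  rw [hA, hB]
  simp

lemma deriv_line (G : E n m → ℝ) (Q v : E n m) (s : ℝ) :
    deriv (fun t => G (Q + t • v)) s = lineDeriv ℝ G (Q + s • v) v := by
  unfold lineDeriv
  have e1 : (fun t => G ((Q + s • v) + t • v)) = fun t => (fun r => G (Q + r • v)) (s + t) := by
    funext t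
    simp only [add_smul, add_assoc]
  have e2 := deriv_comp_const_add (fun r => G (Q + r • v)) s 0
  rw [e1]
  simpa using e2.symm

lemma dl_eq (v : E n m) (G : E n m → ℝ) (P : E n m) : dl v G P = lineDeriv ℝ G P v := rfl
lemma semi_pt (a : ℝ) (J : Set ℝ) (D : Set (Z n m)) (w : E n m → ℝ) (P1 P2 : E n m)
    (h1 : P1 ∈ QT J D) (h2 : P2 ∈ QT J D) (hne : P1 ≠ P2) :
    ENNReal.ofReal (|w P1 - w P2| / rho P1 P2 ^ a) ≤ holderN a J D w := by
  refine le_trans ?_ (le_add_self (a := holderSemi a J D w) (b := supN J D w))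
  exact le_iSup₂_of_le P1 h1 (le_iSup₂_of_le P2 h2 (le_iSup_of_le hne (le_refl _)))

lemma sup_pt (J : Set ℝ) (D : Set (Z n m)) (w : E n m → ℝ) (P : E n m)
    (hP : P ∈ QT J D) : ENNReal.ofReal |w P| ≤ supN J D w :=
  le_iSup₂_of_le P hP (le_refl _)

lemma tail_chain (a : ℝ) (J : Set ℝ) (I : Finset (Fin n)) (u : E n m → ℝ) :
    pieceN I a J (Sbar n m ∩ closure (MI n m I)) u ≤ Ck2N 0 a J (Sbar n m) u := by
  calc pieceN I a J (Sbar n m ∩ closure (MI n m I)) u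
      ≤ C2N a J (Sbar n m) u := by
        unfold C2N
        exact Finset.single_le_sum
          (f := fun I' => pieceN I' a J (Sbar n m ∩ closure (MI n m I')) u)
          (fun _ _ => zero_le) (Finset.mem_univ I)
    _ ≤ Ck2N 0 a J (Sbar n m) u := by
        have h := ENNReal.le_tsum (f := fun p : Idx n m 0 => C2N a J (Sbar n m) (multiDP p.1 u))
          ⟨(0, 0, 0), by simp [MIdx.wt]⟩
        simpa [Ck2N, multiDP, multiD_zero] using h

lemma holder_w_le (a : ℝ) (J : Set ℝ) (I : Finset (Fin n)) (u : E n m → ℝ) (l q : Fin m) :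
    holderN a J (Sbar n m ∩ closure (MI n m I)) (dl (eY n m l) (dl (eY n m q) u))
      ≤ Ck2N 0 a J (Sbar n m) u := by
  set D := Sbar n m ∩ closure (MI n m I)
  calc holderN a J D (dl (eY n m l) (dl (eY n m q) u))
      ≤ ∑ q' : Fin m, holderN a J D (dl (eY n m l) (dl (eY n m q') u)) :=
        Finset.single_le_sum (f := fun q' => holderN a J D (dl (eY n m l) (dl (eY n m q') u)))
          (fun _ _ => zero_le) (Finset.mem_univ q)
    _ ≤ ∑ l' : Fin m, ∑ q' : Fin m, holderN a J D (dl (eY n m l') (dl (eY n m q') u)) :=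
        Finset.single_le_sum (f := fun l' => ∑ q' : Fin m, holderN a J D (dl (eY n m l') (dl (eY n m q') u)))
          (fun _ _ => zero_le) (Finset.mem_univ l)
    _ ≤ pieceN I a J D u := le_add_self
    _ ≤ Ck2N 0 a J (Sbar n m) u := tail_chain a J I u

lemma ckn1_le (a : ℝ) (J : Set ℝ) (I : Finset (Fin n)) (u : E n m → ℝ) :
    CkN 1 a J (Sbar n m ∩ closure (MI n m I)) u ≤ Ck2N 0 a J (Sbar n m) u := by
  set D := Sbar n m ∩ closure (MI n m I)
  calc CkN 1 a J D u
      ≤ pieceN I a J D u :=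
        le_add_right (le_add_right (le_add_right (le_add_right (le_add_right
          (le_add_right le_self_add)))))
    _ ≤ Ck2N 0 a J (Sbar n m) u := tail_chain a J I u

lemma holder_G_le (a : ℝ) (J : Set ℝ) (I : Finset (Fin n)) (u : E n m → ℝ) (q : Fin m) :
    holderN a J (Sbar n m ∩ closure (MI n m I)) (dl (eY n m q) u)
      ≤ Ck2N 0 a J (Sbar n m) u := by
  set D := Sbar n m ∩ closure (MI n m I)
  calc holderN a J D (dl (eY n m q) u)
      ≤ CkN 1 a J D u := by
        have h := ENNReal.le_tsum (f := fun p : Idx n m 1 => holderN a J D (multiDP p.1 u))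
          ⟨(0, 0, Pi.single q 1), by simp [MIdx.wt, Finset.sum_pi_single']⟩
        simpa [CkN, multiDP, multiD_y] using h
    _ ≤ Ck2N 0 a J (Sbar n m) u := ckn1_le a J I u

lemma holder_u_le (a : ℝ) (J : Set ℝ) (I : Finset (Fin n)) (u : E n m → ℝ) :
    holderN a J (Sbar n m ∩ closure (MI n m I)) u ≤ Ck2N 0 a J (Sbar n m) u := by
  set D := Sbar n m ∩ closure (MI n m I)
  calc holderN a J D u
      ≤ CkN 1 a J D u := by
        have h := ENNReal.le_tsum (f := fun p : Idx n m 1 => holderN a J D (multiDP p.1 u))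
          ⟨(0, 0, 0), by simp [MIdx.wt]⟩
        simpa [CkN, multiDP, multiD_zero] using h
    _ ≤ Ck2N 0 a J (Sbar n m) u := ckn1_le a J I u

lemma mem_piece (P : E n m) (J : Set ℝ) (hP : P ∈ QT J (Sbar n m)) :
    P ∈ QT J (Sbar n m ∩ closure (MI n m (Finset.univ.filter (fun i => P.2.1 i ≤ 1)))) := by
  obtain ⟨ht, hz⟩ := hP
  refine ⟨ht, hz, mem_closure_MI _ _ ?_ ?_⟩
  · intro i hi
    exact ⟨hz i, (Finset.mem_filter.mp hi).2⟩
  · intro j hj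
    have : ¬ (P.2.1 j ≤ 1) := fun hc => hj (Finset.mem_filter.mpr ⟨Finset.mem_univ _, hc⟩)
    linarith

lemma sup_u_le (a : ℝ) (J : Set ℝ) (u : E n m → ℝ) :
    supN J (Sbar n m) u ≤ Ck2N 0 a J (Sbar n m) u := by
  apply iSup₂_le
  intro P hP
  set I0 := Finset.univ.filter (fun i => P.2.1 i ≤ 1)
  calc ENNReal.ofReal |u P|
      ≤ supN J (Sbar n m ∩ closure (MI n m I0)) u := sup_pt _ _ _ _ (mem_piece P J hP)
    _ ≤ holderN a J (Sbar n m ∩ closure (MI n m I0)) u := le_self_add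
    _ ≤ Ck2N 0 a J (Sbar n m) u := holder_u_le a J I0 u
lemma shift_fst (Q : E n m) (r : Fin m) (s : ℝ) : (Q + s • eY n m r).1 = Q.1 := by
  simp [eY]

lemma shift_x (Q : E n m) (r : Fin m) (s : ℝ) : (Q + s • eY n m r).2.1 = Q.2.1 := by
  simp [eY]

lemma shift_y (Q : E n m) (r : Fin m) (s : ℝ) (l' : Fin m) :
    (Q + s • eY n m r).2.2 l' = Q.2.2 l' + s * (Pi.single r 1 : Fin m → ℝ) l' := by
  simp [eY]

lemma mem_sbar_of_eq (J : Set ℝ) (P Q : E n m) (hP : P ∈ QT J (Sbar n m))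
    (h1 : Q.1 = P.1) (h2 : Q.2.1 = P.2.1) : Q ∈ QT J (Sbar n m) := by
  refine ⟨h1 ▸ hP.1, fun i => ?_⟩
  rw [h2]
  exact hP.2 i

lemma mem_piece_of_eq (J : Set ℝ) (P Q : E n m) (hP : P ∈ QT J (Sbar n m))
    (h1 : Q.1 = P.1) (h2 : Q.2.1 = P.2.1) :
    Q ∈ QT J (Sbar n m ∩ closure (MI n m (Finset.univ.filter fun i => P.2.1 i ≤ 1))) := by
  refine ⟨h1 ▸ hP.1, fun i => by rw [h2]; exact hP.2 i, mem_closure_MI _ _ ?_ ?_⟩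
  · intro i hi
    rw [h2]
    exact ⟨hP.2 i, (Finset.mem_filter.mp hi).2⟩
  · intro j hj
    have hc : ¬ (P.2.1 j ≤ 1) := fun hc => hj (Finset.mem_filter.mpr ⟨Finset.mem_univ _, hc⟩)
    rw [h2]
    linarith

lemma holder_real (a : ℝ) (ha0 : 0 < a) (J : Set ℝ) (D : Set (Z n m)) (Gf : E n m → ℝ)
    (Kenn : ℝ≥0∞) (hKtop : Kenn ≠ ⊤) (hG : holderN a J D Gf ≤ Kenn)
    (Q : E n m) (r : Fin m) (s : ℝ) (hs : 0 ≤ s)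
    (hQ : Q ∈ QT J D) (hQs : Q + s • eY n m r ∈ QT J D) :
    |Gf (Q + s • eY n m r) - Gf Q| ≤ Kenn.toReal * s ^ a := by
  rcases eq_or_lt_of_le hs with rfl | hs'
  · simp [Real.zero_rpow (ne_of_gt ha0)]
  · have hne : Q + s • eY n m r ≠ Q := by
      intro hc
      have h3 := congrArg (fun R : E n m => R.2.2 r) hc
      simp only [shift_y, Pi.single_eq_same, mul_one] at h3
      linarith
    have h1 := (semi_pt a J D Gf _ _ hQs hQ hne).trans hG
    rw [ENNReal.ofReal_le_iff_le_toReal hKtop] at h1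
    rw [rho_shift Q r s hs] at h1
    have hsa : 0 < s ^ a := Real.rpow_pos_of_pos hs' a
    calc |Gf (Q + s • eY n m r) - Gf Q|
        = (|Gf (Q + s • eY n m r) - Gf Q| / s ^ a) * s ^ a := by field_simp
      _ ≤ Kenn.toReal * s ^ a := mul_le_mul_of_nonneg_right h1 hsa.le

lemma deriv_g (Gf : E n m → ℝ) (Q : E n m) (r : Fin m) (s : ℝ) :
    deriv (fun t => Gf (Q + t • eY n m r)) s = dl (eY n m r) Gf (Q + s • eY n m r) :=
  deriv_line Gf Q (eY n m r) s

lemma deriv_g0 (Gf : E n m → ℝ) (Q : E n m) (r : Fin m) :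
    deriv (fun t => Gf (Q + t • eY n m r)) (0:ℝ) = dl (eY n m r) Gf Q := by
  rw [deriv_g Gf Q r 0, zero_smul, add_zero]

lemma hh'_eq (a ε : ℝ) (ha0 : 0 < a) (hε0 : 0 < ε) :
    (ε/4)^(1/a) * ((ε * ((ε/4)^(1/a)) / 8) ^ (1/a))
      = ε ^ (2/a + 1/a^2) * ((1/4:ℝ)^(1/a) * (1/8:ℝ)^(1/a) * (1/4:ℝ)^(1/a^2)) := by
  have e4 : (ε/4:ℝ) = ε * (1/4) := by ring
  have h1 : (ε/4:ℝ)^(1/a) = ε^(1/a) * (1/4:ℝ)^(1/a) := by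
    rw [e4, Real.mul_rpow hε0.le (by norm_num)]
  have h2 : ((ε/4:ℝ)^(1/a))^(1/a) = ε^(1/a^2) * (1/4:ℝ)^(1/a^2) := by
    rw [← Real.rpow_mul (by positivity), show (1/a)*(1/a) = 1/a^2 by ring, e4,
      Real.mul_rpow hε0.le (by norm_num)]
  have e8 : (ε * ((ε/4:ℝ)^(1/a)) / 8) = (ε * (ε/4:ℝ)^(1/a)) * (1/8) := by ring
  have h3 : ((ε * ((ε/4:ℝ)^(1/a)) / 8))^(1/a)
      = ε^(1/a) * ((ε/4:ℝ)^(1/a))^(1/a) * (1/8:ℝ)^(1/a) := by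
    rw [e8, Real.mul_rpow (by positivity) (by norm_num),
      Real.mul_rpow hε0.le (by positivity)]
  rw [h3, h2, h1, show (2/a + 1/a^2) = 1/a + (1/a + 1/a^2) by ring,
    Real.rpow_add hε0, Real.rpow_add hε0]
  ring
/-- Interpolation inequality (2.12): sup norm of `u_{y_l y_k}`,
for `u` supported in `[0,T] × M̄''_I`. -/
theorem statement10 (n m : ℕ) (hnm : 1 ≤ n + m) (T : ℝ) (hT : 0 < T)
    (a : ℝ) (ha : a ∈ Set.Ioo (0:ℝ) 1) (I : Finset (Fin n)) :
    ∃ C > (0:ℝ), ∃ m₀ > (0:ℝ), ∀ u : E n m → ℝ,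
      MemCk2 0 a (Set.Icc 0 T) (Sbar n m) u →
      Function.support u ⊆ QT (Set.Icc 0 T) (closure (MI'' n m I)) →
      ∀ ε ∈ Set.Ioo (0:ℝ) 1, ∀ l q : Fin m,
        supN (Set.Icc 0 T) (Sbar n m) (dl (eY n m l) (dl (eY n m q) u)) ≤
          ENNReal.ofReal ε * Ck2N 0 a (Set.Icc 0 T) (Sbar n m) u
            + ENNReal.ofReal (C * ε ^ (-m₀)) * supN (Set.Icc 0 T) (Sbar n m) u := by
  obtain ⟨ha0, ha1⟩ := ha
  have haen : a ≠ 0 := ne_of_gt ha0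
  set c : ℝ := (1/4:ℝ)^(1/a) * (1/8:ℝ)^(1/a) * (1/4:ℝ)^(1/a^2) with hc_def
  have hc0 : 0 < c := by positivity
  refine ⟨4 / c, by positivity, 2/a + 1/a^2, by positivity, ?_⟩
  intro u hmem hsupp ε hε l q
  obtain ⟨hε0, hε1⟩ := hε
  set J := Set.Icc (0:ℝ) T with hJ
  set Kenn := Ck2N 0 a J (Sbar n m) u with hKenn
  have hKtop : Kenn ≠ ⊤ := hmem.1
  set Kr := Kenn.toReal with hKr
  have hKr0 : 0 ≤ Kr := ENNReal.toReal_nonneg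
  have hsupu : supN J (Sbar n m) u ≤ Kenn := sup_u_le a J u
  have hsuptop : supN J (Sbar n m) u ≠ ⊤ := ne_top_of_le_ne_top hKtop hsupu
  set Sr := (supN J (Sbar n m) u).toReal with hSr
  have hSr0 : 0 ≤ Sr := ENNReal.toReal_nonneg
  have husup : ∀ R ∈ QT J (Sbar n m), |u R| ≤ Sr := by
    intro R hR
    have h1 := sup_pt J (Sbar n m) u R hR
    have h2 := ENNReal.toReal_mono hsuptop h1
    rwa [ENNReal.toReal_ofReal (abs_nonneg _)] at h2
  set h := ((ε/4:ℝ))^(1/a) with hh_def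
  have hhpos : 0 < h := Real.rpow_pos_of_pos (by linarith) _
  set h' := ((ε * h / 8:ℝ))^(1/a) with hh'_def
  have hh'pos : 0 < h' := Real.rpow_pos_of_pos (by positivity) _
  have hha : h ^ a = ε / 4 := by
    rw [hh_def, ← Real.rpow_mul (by positivity), one_div_mul_cancel haen, Real.rpow_one]
  have hh'a : h' ^ a = ε * h / 8 := by
    rw [hh'_def, ← Real.rpow_mul (by positivity), one_div_mul_cancel haen, Real.rpow_one]
  have hhh' : h * h' = ε ^ (2/a + 1/a^2) * c := by
    rw [hh'_def, hh_def, hc_def]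
    exact hh'_eq a ε ha0 hε0
  have hCe : (4 / c) * ε ^ (-(2/a + 1/a^2)) = 4 / (h * h') := by
    rw [Real.rpow_neg hε0.le, hhh']
    have hm0 : 0 < ε ^ (2/a+1/a^2) := Real.rpow_pos_of_pos hε0 _
    field_simp
  have hCpos : 0 ≤ (4 / c) * ε ^ (-(2/a + 1/a^2)) := by positivity
  refine iSup₂_le ?_
  intro P hP
  set I0 := Finset.univ.filter (fun i : Fin n => P.2.1 i ≤ 1) with hI0
  set D := Sbar n m ∩ closure (MI n m I0) with hD
  have hmemD : ∀ (Q : E n m), Q.1 = P.1 → Q.2.1 = P.2.1 → Q ∈ QT J D :=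
    fun Q h1 h2 => mem_piece_of_eq J P Q hP h1 h2
  have hmemS : ∀ (Q : E n m), Q.1 = P.1 → Q.2.1 = P.2.1 → Q ∈ QT J (Sbar n m) :=
    fun Q h1 h2 => mem_sbar_of_eq J P Q hP h1 h2
  have hGw : holderN a J D (dl (eY n m l) (dl (eY n m q) u)) ≤ Kenn := holder_w_le a J I0 u l q
  have hGG : holderN a J D (dl (eY n m q) u) ≤ Kenn := holder_G_le a J I0 u q
  have hinner : ∀ s : ℝ, 0 ≤ s →
      |dl (eY n m q) u (P + s • eY n m l)| ≤ Kr * h'^a + 2 * Sr / h' := by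
    intro s hs0
    set Q := P + s • eY n m l with hQdef
    have hQ1 : Q.1 = P.1 := shift_fst P l s
    have hQx : Q.2.1 = P.2.1 := shift_x P l s
    have hlem := lemA (fun s' => u (Q + s' • eY n m q)) h' (Kr * h'^a) Sr hh'pos
      (by positivity) hSr0 ?_ ?_
    · rwa [deriv_g0 u Q q] at hlem
    · intro s' hs'
      rw [deriv_g u Q q s', deriv_g0 u Q q]
      have hmem1 : Q ∈ QT J D := hmemD Q hQ1 hQx
      have hmem2 : Q + s' • eY n m q ∈ QT J D :=
        hmemD _ (by rw [shift_fst, hQ1]) (by rw [shift_x, hQx])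
      have hH := holder_real a ha0 J D (dl (eY n m q) u) Kenn hKtop hGG Q q s' hs'.1 hmem1 hmem2
      calc |dl (eY n m q) u (Q + s' • eY n m q) - dl (eY n m q) u Q|
          ≤ Kr * s'^a := hH
        _ ≤ Kr * h'^a := mul_le_mul_of_nonneg_left (Real.rpow_le_rpow hs'.1 hs'.2 ha0.le) hKr0
    · intro s' hs'
      exact husup _ (hmemS _ (by rw [shift_fst, hQ1]) (by rw [shift_x, hQx]))
  have houter : |dl (eY n m l) (dl (eY n m q) u) P|
      ≤ Kr * h^a + 2 * (Kr * h'^a + 2*Sr/h') / h := by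
    have hlem := lemA (fun s => dl (eY n m q) u (P + s • eY n m l)) h (Kr * h^a)
      (Kr * h'^a + 2*Sr/h') hhpos (by positivity) (by positivity) ?_ ?_
    · rwa [deriv_g0 (dl (eY n m q) u) P l] at hlem
    · intro s hs
      rw [deriv_g (dl (eY n m q) u) P l s, deriv_g0 (dl (eY n m q) u) P l]
      have hmem1 : P ∈ QT J D := hmemD P rfl rfl
      have hmem2 : P + s • eY n m l ∈ QT J D := hmemD _ (shift_fst P l s) (shift_x P l s)
      have hH := holder_real a ha0 J D (dl (eY n m l) (dl (eY n m q) u)) Kenn hKtop hGw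
        P l s hs.1 hmem1 hmem2
      exact hH.trans (mul_le_mul_of_nonneg_left (Real.rpow_le_rpow hs.1 hs.2 ha0.le) hKr0)
    · intro s hs
      exact hinner s hs.1
  have harith : |dl (eY n m l) (dl (eY n m q) u) P|
      ≤ ε * Kr + ((4/c) * ε^(-(2/a+1/a^2))) * Sr := by
    rw [hCe]
    refine houter.trans ?_
    rw [hha, hh'a]
    have e1 : Kr * (ε/4) + 2 * (Kr * (ε*h/8) + 2*Sr/h')/h = ε/2 * Kr + (4/(h*h')) * Sr := by
      field_simp
      ring
    rw [e1]
    have h2 : ε/2*Kr ≤ ε*Kr := by nlinarith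
    linarith
  calc ENNReal.ofReal |dl (eY n m l) (dl (eY n m q) u) P|
      ≤ ENNReal.ofReal (ε * Kr + ((4/c) * ε^(-(2/a+1/a^2))) * Sr) :=
        ENNReal.ofReal_le_ofReal harith
    _ ≤ ENNReal.ofReal (ε * Kr) + ENNReal.ofReal (((4/c) * ε^(-(2/a+1/a^2))) * Sr) :=
        ENNReal.ofReal_add_le
    _ = ENNReal.ofReal ε * ENNReal.ofReal Kr
        + ENNReal.ofReal ((4/c) * ε^(-(2/a+1/a^2))) * ENNReal.ofReal Sr := by
        rw [ENNReal.ofReal_mul hε0.le, ENNReal.ofReal_mul hCpos]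
    _ = ENNReal.ofReal ε * Kenn
        + ENNReal.ofReal ((4/c) * ε^(-(2/a+1/a^2))) * supN J (Sbar n m) u := by
        rw [hKr, hSr, ENNReal.ofReal_toReal hKtop, ENNReal.ofReal_toReal hsuptop]

end Kimura
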